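/- Fix a prime power q ≥ 2 and a real x1 > 0. Define f(a) = 1 + x1/(x1 + (q-1)a) + (q-1)a/(2x1 + (q-2)a) for a ≥ 0. Then f attains its minimum on [0, ∞) at a* = ((√2·q - 2)/(q² - 2))·x1. -/

import Mathlib

set_option maxHeartbeats 1000000 in
/-- For `q ≥ 2` and `x1 > 0`, the function
`f(a) = 1 + x1/(x1+(q-1)a) + (q-1)a/(2x1+(q-2)a)` attains its minimum over
`a ∈ [0,∞)` at `a* = ((√2 q - 2)/(q² - 2)) x1`. -/
theorem stmt_2 (q : ℕ) (hq : 2 ≤ q) (x1 : ℝ) (hx1 : 0 < x1)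
    (f : ℝ → ℝ)
    (hf : ∀ a : ℝ, f a = 1 + x1 / (x1 + ((q : ℝ) - 1) * a)
      + ((q : ℝ) - 1) * a / (2 * x1 + ((q : ℝ) - 2) * a)) :
    ∀ a : ℝ, 0 ≤ a →
      f ((Real.sqrt 2 * (q : ℝ) - 2) / ((q : ℝ) ^ 2 - 2) * x1) ≤ f a := by
  intro a ha
  have hQ : (2:ℝ) ≤ (q:ℝ) := by exact_mod_cast hq
  set Q : ℝ := (q:ℝ) with hQdef
  have hs0 : (0:ℝ) ≤ Real.sqrt 2 := Real.sqrt_nonneg 2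
  have hs2 : Real.sqrt 2 ^ 2 = 2 := Real.sq_sqrt (by norm_num)
  set s : ℝ := Real.sqrt 2 with hsdef
  have hs1 : (1:ℝ) < s := by nlinarith
  have hM : (0:ℝ) < Q ^ 2 - 2 := by nlinarith
  have hT : (0:ℝ) < s * Q - 2 := by nlinarith
  set t : ℝ := (s * Q - 2) / (Q ^ 2 - 2) * x1 with htdef
  have ht' : t * (Q ^ 2 - 2) = (s * Q - 2) * x1 := by
    rw [htdef]; field_simp
  have ht0 : 0 ≤ t := mul_nonneg (div_nonneg hT.le hM.le) hx1.le
  have hD1a : (0:ℝ) < x1 + (Q - 1) * a := by nlinarith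
  have hD2a : (0:ℝ) < 2 * x1 + (Q - 2) * a := by nlinarith
  have hD1t : (0:ℝ) < x1 + (Q - 1) * t := by nlinarith
  have hD2t : (0:ℝ) < 2 * x1 + (Q - 2) * t := by nlinarith
  rw [hf a, hf t, ← sub_nonneg]
  have key : (Q ^ 2 - 2) ^ 2 *
      ((x1 * (2 * x1 + (Q - 2) * a) + (Q - 1) * a * (x1 + (Q - 1) * a))
          * ((x1 + (Q - 1) * t) * (2 * x1 + (Q - 2) * t))
        - (x1 * (2 * x1 + (Q - 2) * t) + (Q - 1) * t * (x1 + (Q - 1) * t))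
          * ((x1 + (Q - 1) * a) * (2 * x1 + (Q - 2) * a)))
      = s * x1 ^ 2 * Q * (Q - 1) * ((Q ^ 2 - 2) * a - (s * Q - 2) * x1) ^ 2 := by
    linear_combination
      (-4 * x1^2 * t + 4 * Q * x1^2 * t + 2 * Q * x1^3 * s + 2 * Q^2 * x1^2 * t
        - 2 * Q^2 * x1^3 - 2 * Q^2 * x1^3 * s - 2 * Q^3 * x1^2 * t + 2 * Q^3 * x1^3
        + 4 * a * x1 * t + 4 * a * x1^2 - 4 * a * Q * x1 * t - 4 * a * Q * x1^2
        - 2 * a * Q * x1^2 * s - 4 * a * Q^2 * x1 * t - 2 * a * Q^2 * x1^2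
        + 2 * a * Q^2 * x1^2 * s + 4 * a * Q^3 * x1 * t + 2 * a * Q^3 * x1^2
        + a * Q^3 * x1^2 * s + a * Q^4 * x1 * t - a * Q^4 * x1^2 * s
        - a * Q^5 * x1 * t - 4 * a^2 * x1 + 4 * a^2 * Q * x1 + 4 * a^2 * Q^2 * x1
        - 4 * a^2 * Q^3 * x1 - a^2 * Q^4 * x1 + a^2 * Q^5 * x1) * ht'
      + (-2 * Q^2 * x1^4 + 2 * Q^3 * x1^4 + Q^3 * x1^4 * s - Q^4 * x1^4 * s
        + 2 * a * Q^2 * x1^3 - 2 * a * Q^3 * x1^3 - a * Q^4 * x1^3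
        + a * Q^5 * x1^3) * hs2
  have hR : 0 ≤ s * x1 ^ 2 * Q * (Q - 1) * ((Q ^ 2 - 2) * a - (s * Q - 2) * x1) ^ 2 := by
    have h1 : (0:ℝ) ≤ s * x1 ^ 2 * Q * (Q - 1) :=
      mul_nonneg (mul_nonneg (mul_nonneg hs0 (sq_nonneg x1))
        (by linarith : (0:ℝ) ≤ Q)) (by linarith : (0:ℝ) ≤ Q - 1)
    exact mul_nonneg h1 (sq_nonneg _)
  have hnum : 0 ≤ (x1 * (2 * x1 + (Q - 2) * a) + (Q - 1) * a * (x1 + (Q - 1) * a))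
          * ((x1 + (Q - 1) * t) * (2 * x1 + (Q - 2) * t))
        - (x1 * (2 * x1 + (Q - 2) * t) + (Q - 1) * t * (x1 + (Q - 1) * t))
          * ((x1 + (Q - 1) * a) * (2 * x1 + (Q - 2) * a)) := by
    nlinarith [key, hR, mul_pos hM hM]
  have quot : (1 + x1 / (x1 + (Q - 1) * a) + (Q - 1) * a / (2 * x1 + (Q - 2) * a))
      - (1 + x1 / (x1 + (Q - 1) * t) + (Q - 1) * t / (2 * x1 + (Q - 2) * t))
      = ((x1 * (2 * x1 + (Q - 2) * a) + (Q - 1) * a * (x1 + (Q - 1) * a))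
          * ((x1 + (Q - 1) * t) * (2 * x1 + (Q - 2) * t))
        - (x1 * (2 * x1 + (Q - 2) * t) + (Q - 1) * t * (x1 + (Q - 1) * t))
          * ((x1 + (Q - 1) * a) * (2 * x1 + (Q - 2) * a)))
      / ((x1 + (Q - 1) * a) * (2 * x1 + (Q - 2) * a)
          * ((x1 + (Q - 1) * t) * (2 * x1 + (Q - 2) * t))) := by
    rw [add_assoc (1:ℝ) (x1 / (x1 + (Q - 1) * a)), add_assoc (1:ℝ) (x1 / (x1 + (Q - 1) * t)),
      div_add_div _ _ hD1a.ne' hD2a.ne', div_add_div _ _ hD1t.ne' hD2t.ne',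
      one_add_div (mul_pos hD1a hD2a).ne', one_add_div (mul_pos hD1t hD2t).ne',
      div_sub_div _ _ (mul_pos hD1a hD2a).ne' (mul_pos hD1t hD2t).ne']
    ring
  rw [quot]
  exact div_nonneg hnum
    (mul_nonneg (mul_pos hD1a hD2a).le (mul_pos hD1t hD2t).le)
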